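/- Let μ: ℂ → ℂ be continuous on ℂ, holomorphic away from a compact set containing the support of s, with μ(k) → 1 as |k| → ∞ at rate O(1/|k|), and suppose the 1-form ω = (μ(k)μ(−k)/k) dk + (conj(μ(k)μ(−k))/k̄) dk̄ is closed on the annulus {R^{−1} ≤ |k| ≤ R} for all large R. Then μ(0)² = conj(μ(0))², i.e., μ(0)² is real, so μ(0) is purely real or purely imaginary. -/

import Mathlib

open MeasureTheory Complex Filter ComplexConjugate
open scoped ENNReal NNReal Topology

/-- `∂φ = (1/2)(∂₁φ − i ∂₂φ)`. -/
noncomputable def pdOp (φ : ℂ → ℂ) (x : ℂ) : ℂ :=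
  (1 / 2 : ℂ) * (fderiv ℝ φ x 1 - Complex.I * fderiv ℝ φ x Complex.I)

/-- `∂̄φ = (1/2)(∂₁φ + i ∂₂φ)`. -/
noncomputable def dbOp (φ : ℂ → ℂ) (x : ℂ) : ℂ :=
  (1 / 2 : ℂ) * (fderiv ℝ φ x 1 + Complex.I * fderiv ℝ φ x Complex.I)

section Aux

lemma clm_key (L : ℂ →L[ℝ] ℂ) (c : ℂ) : L c + I * L (I * c) = conj c * (L 1 + I * L I) := by
  have h1 : c = c.re • (1:ℂ) + c.im • I := by
    apply Complex.ext <;> simp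
  have h2 : I * c = (-c.im) • (1:ℂ) + c.re • I := by
    apply Complex.ext <;> simp
  have h3 : (conj c : ℂ) = (c.re:ℂ) - (c.im:ℂ) * I := by
    apply Complex.ext <;> simp
  rw [show L c = L (c.re • (1:ℂ) + c.im • I) from by rw [← h1],
      show L (I * c) = L ((-c.im) • (1:ℂ) + c.re • I) from by rw [← h2],
      map_add, map_add, _root_.map_smul, _root_.map_smul, _root_.map_smul, _root_.map_smul, h3]
  simp only [Complex.real_smul, ofReal_neg]
  linear_combination ((c.im:ℂ) * L I) * Complex.I_sq

lemma fderiv_real_of_complex {f : ℂ → ℂ} {x : ℂ} (h : DifferentiableAt ℂ f x) :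
    fderiv ℝ f x = (fderiv ℂ f x).restrictScalars ℝ :=
  h.fderiv_restrictScalars ℝ

lemma dbOp_mul_holo (u v : ℂ → ℂ) (k : ℂ) (hu : DifferentiableAt ℝ u k)
    (hv : DifferentiableAt ℂ v k) :
    dbOp (fun w => u w * v w) k = v k * dbOp u k := by
  have hv' : DifferentiableAt ℝ v k := hv.restrictScalars ℝ
  have hd : fderiv ℝ (fun w => u w * v w) k
      = u k • fderiv ℝ v k + v k • fderiv ℝ u k := fderiv_mul hu hv'
  have hfv : fderiv ℝ v k = (fderiv ℂ v k).restrictScalars ℝ := fderiv_real_of_complex hv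
  have hvI : fderiv ℝ v k I = I * fderiv ℝ v k 1 := by
    rw [hfv]
    simp only [ContinuousLinearMap.coe_restrictScalars']
    conv_lhs => rw [show (I : ℂ) = I • (1:ℂ) by simp]
    rw [_root_.map_smul, smul_eq_mul]
  simp only [dbOp, hd, ContinuousLinearMap.add_apply, ContinuousLinearMap.coe_smul',
    Pi.smul_apply, smul_eq_mul, hvI]
  ring_nf
  linear_combination (u k * fderiv ℝ v k 1 / 2) * Complex.I_sq

lemma dbOp_comp_holo (u φ : ℂ → ℂ) (z : ℂ) (hu : DifferentiableAt ℝ u (φ z))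
    (hφ : DifferentiableAt ℂ φ z) :
    dbOp (u ∘ φ) z = conj (deriv φ z) * dbOp u (φ z) := by
  have hφ' : DifferentiableAt ℝ φ z := hφ.restrictScalars ℝ
  have hd : fderiv ℝ (u ∘ φ) z = (fderiv ℝ u (φ z)).comp (fderiv ℝ φ z) := fderiv_comp z hu hφ'
  have hfφ : fderiv ℝ φ z = (fderiv ℂ φ z).restrictScalars ℝ := fderiv_real_of_complex hφ
  have happ : ∀ v : ℂ, fderiv ℝ φ z v = v * deriv φ z := by
    intro v
    rw [hfφ]
    simp only [ContinuousLinearMap.coe_restrictScalars']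
    rw [show v = v • (1:ℂ) by simp, _root_.map_smul, smul_eq_mul, fderiv_apply_one_eq_deriv]; simp
  set L := fderiv ℝ u (φ z)
  have key := clm_key L (deriv φ z)
  simp only [dbOp, hd, ContinuousLinearMap.comp_apply, happ, one_mul]
  linear_combination (1/2 : ℂ) * key

lemma pdOp_conj (g : ℂ → ℂ) (k : ℂ) :
    pdOp (fun w => conj (g w)) k = conj (dbOp g k) := by
  have h : (fun w => conj (g w)) = (⇑Complex.conjCLE) ∘ g := rfl
  have hf : fderiv ℝ (⇑Complex.conjCLE ∘ g) k
      = (Complex.conjCLE : ℂ →L[ℝ] ℂ).comp (fderiv ℝ g k) :=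
    Complex.conjCLE.comp_fderiv
  have h2 : conj (2:ℂ) = 2 := by rw [Complex.conj_eq_iff_im]; norm_num
  set L := fderiv ℝ g k with hL
  have e1 : fderiv ℝ (fun w => conj (g w)) k 1 = conj (L 1) := by
    rw [h, hf]; rfl
  have e2 : fderiv ℝ (fun w => conj (g w)) k I = conj (L I) := by
    rw [h, hf]; rfl
  have hhalf : conj ((1:ℂ)/2) = 1/2 := by
    rw [map_div₀, h2]; simp
  rw [pdOp, dbOp, e1, e2, map_mul, map_add, map_mul, Complex.conj_I, hhalf]
  ring

end Aux

lemma eq_of_forall_abs_le {x y : ℝ} (h : ∀ ε : ℝ, 0 < ε → |x - y| ≤ 2*Real.pi*ε) :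
    x = y := by
  by_contra hne
  have hd : 0 < |x - y| := abs_pos.mpr (sub_ne_zero.mpr hne)
  have hπ := Real.pi_pos
  have h2 := h (|x - y| / (4*Real.pi)) (by positivity)
  have h3 : 2*Real.pi*(|x - y|/(4*Real.pi)) = |x - y|/2 := by field_simp; ring
  rw [h3] at h2; linarith


/-- If `μ` is continuous, holomorphic away from a compact set, `μ(k) = 1 + O(1/|k|)`, and the
form `ω = (μ(k)μ(−k)/k)dk + (conj(μ(k)μ(−k))/k̄)dk̄` is closed away from `0`
(i.e. `∂̄(μ(k)μ(−k)/k) = ∂(conj(μ(k)μ(−k))/k̄)`), then `μ(0)² = conj(μ(0))²`, so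
`μ(0)` is purely real or purely imaginary. -/
theorem stmt15 (μ : ℂ → ℂ) (K : Set ℂ) (hK : IsCompact K)
    (hcont : Continuous μ)
    (hhol : ∀ k ∉ K, DifferentiableAt ℂ μ k)
    (hdecay : ∃ C R : ℝ, ∀ k : ℂ, R ≤ ‖k‖ → ‖μ k - 1‖ ≤ C / ‖k‖)
    (hdiff : ∀ k : ℂ, k ≠ 0 → DifferentiableAt ℝ μ k)
    (hclosed : ∀ k : ℂ, k ≠ 0 →
      dbOp (fun w => μ w * μ (-w) / w) k = pdOp (fun w => conj (μ w * μ (-w)) / conj w) k) :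
    μ 0 ^ 2 = conj (μ 0) ^ 2 ∧ ((μ 0).im = 0 ∨ (μ 0).re = 0) := by
  obtain ⟨C, R, hCR⟩ := hdecay
  set f : ℂ → ℂ := fun w => μ w * μ (-w) with hfdef
  set ψ : ℂ → ℂ := fun z => f (Complex.exp z) with hψdef
  -- basic facts
  have hfc : Continuous f := hcont.mul (hcont.comp continuous_neg)
  have hψc : Continuous ψ := hfc.comp Complex.continuous_exp
  have hfd : ∀ k : ℂ, k ≠ 0 → DifferentiableAt ℝ f k := by
    intro k hk
    exact (hdiff k hk).mul
      (((hdiff (-k) (neg_ne_zero.2 hk)).comp k (differentiableAt_id.neg)))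
  have hψd : ∀ z : ℂ, DifferentiableAt ℝ ψ z := by
    intro z
    have he : DifferentiableAt ℝ Complex.exp z :=
      DifferentiableAt.restrictScalars (𝕜' := ℂ) ℝ (Complex.differentiable_exp z)
    exact (hfd _ (Complex.exp_ne_zero z)).comp z he
  -- realness of ∂̄(f/w)
  have hreal : ∀ k : ℂ, k ≠ 0 →
      conj (dbOp (fun w => f w / w) k) = dbOp (fun w => f w / w) k := by
    intro k hk
    have h1 := hclosed k hk
    have h2 : (fun w => conj (μ w * μ (-w)) / conj w) = fun w => conj (f w / w) := by
      funext w; rw [map_div₀]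
    rw [h2, pdOp_conj] at h1
    exact h1.symm
  -- imaginary part of ∂̄ψ is zero
  have hψval : ∀ z : ℂ, (dbOp ψ z).im = 0 := by
    intro z
    have hk : Complex.exp z ≠ 0 := Complex.exp_ne_zero z
    have hcomp : dbOp ψ z = conj (deriv Complex.exp z) * dbOp f (Complex.exp z) :=
      dbOp_comp_holo f Complex.exp z (hfd _ hk) (Complex.differentiable_exp z)
    have hderiv : deriv Complex.exp z = Complex.exp z := by
      simp [Complex.deriv_exp]
    have hgf : dbOp (fun w => f w / w) (Complex.exp z)
        = (Complex.exp z)⁻¹ * dbOp f (Complex.exp z) := by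
      have h := dbOp_mul_holo f (fun w => w⁻¹) (Complex.exp z) (hfd _ hk)
        (differentiableAt_inv hk)
      have h2 : (fun w => f w / w) = fun w => f w * w⁻¹ := by
        funext w; rw [div_eq_mul_inv]
      rw [h2, h]
    have hfk : dbOp f (Complex.exp z)
        = Complex.exp z * dbOp (fun w => f w / w) (Complex.exp z) := by
      rw [hgf, ← mul_assoc, mul_inv_cancel₀ hk, one_mul]
    set t := dbOp (fun w => f w / w) (Complex.exp z) with ht
    have htim : t.im = 0 := Complex.conj_eq_iff_im.mp (hreal _ hk)
    have hns : conj (Complex.exp z) * Complex.exp z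
        = ((Complex.normSq (Complex.exp z) : ℝ) : ℂ) := by
      rw [mul_comm, Complex.mul_conj]
    rw [hcomp, hderiv, hfk, ← mul_assoc, hns]
    simp [htim]
  -- divergence theorem: the integral J a is independent of a
  set J : ℝ → ℝ := fun a => ∫ y in (0:ℝ)..(2*Real.pi), (ψ (a + y*I)).im with hJdef
  have hJconst : ∀ a : ℝ, J a = J 0 := by
    intro a
    set e : (ℝ × ℝ) ≃L[ℝ] ℂ := Complex.equivRealProdCLM.symm with hedef
    have he : ∀ x y : ℝ, (x:ℂ) + (y:ℂ) * I = e (x, y) := fun x y =>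
      (Complex.mk_eq_add_mul_I x y).symm
    set F : ℝ × ℝ → ℝ := fun p => (ψ (e p)).im with hFdef
    set G : ℝ × ℝ → ℝ := fun p => (ψ (e p)).re with hGdef
    set F' : ℝ × ℝ → (ℝ × ℝ) →L[ℝ] ℝ := fun p =>
      (Complex.imCLM.comp ((fderiv ℝ ψ (e p)).comp (e : (ℝ × ℝ) →L[ℝ] ℂ))) with hF'def
    set G' : ℝ × ℝ → (ℝ × ℝ) →L[ℝ] ℝ := fun p =>
      (Complex.reCLM.comp ((fderiv ℝ ψ (e p)).comp (e : (ℝ × ℝ) →L[ℝ] ℂ))) with hG'def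
    have hFc : Continuous F := Complex.continuous_im.comp (hψc.comp e.continuous)
    have hGc : Continuous G := Complex.continuous_re.comp (hψc.comp e.continuous)
    have hFd : ∀ p : ℝ × ℝ, HasFDerivAt F (F' p) p := by
      intro p
      exact Complex.imCLM.hasFDerivAt.comp p (((hψd (e p)).hasFDerivAt).comp p e.hasFDerivAt)
    have hGd : ∀ p : ℝ × ℝ, HasFDerivAt G (G' p) p := by
      intro p
      exact Complex.reCLM.hasFDerivAt.comp p (((hψd (e p)).hasFDerivAt).comp p e.hasFDerivAt)
    have he1 : (e : (ℝ × ℝ) →L[ℝ] ℂ) (1, 0) = 1 := rfl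
    have he2 : (e : (ℝ × ℝ) →L[ℝ] ℂ) (0, 1) = I := rfl
    have hdiv : ∀ p : ℝ × ℝ, F' p (1, 0) + G' p (0, 1) = 0 := by
      intro p
      have h := hψval (e p)
      have him : (dbOp ψ (e p)).im
          = (1/2) * ((fderiv ℝ ψ (e p) 1).im + (fderiv ℝ ψ (e p) I).re) := by
        rw [dbOp]
        simp [Complex.mul_im, Complex.add_im, Complex.add_re]
      rw [him] at h
      simp only [hF'def, hG'def, ContinuousLinearMap.comp_apply, he1, he2,
        Complex.imCLM_apply, Complex.reCLM_apply]
      linarith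
    have Hi : IntegrableOn (fun p : ℝ × ℝ => F' p (1, 0) + G' p (0, 1))
        (Set.uIcc 0 a ×ˢ Set.uIcc 0 (2*Real.pi)) volume := by
      have hzero : (fun p : ℝ × ℝ => F' p (1, 0) + G' p (0, 1)) = fun _ => (0:ℝ) :=
        funext hdiv
      rw [hzero]
      exact integrableOn_zero
    have key := integral2_divergence_prod_of_hasFDerivAt_off_countable F G F' G'
      0 0 a (2*Real.pi) ∅ Set.countable_empty hFc.continuousOn hGc.continuousOn
      (fun p _ => hFd p) (fun p _ => hGd p) Hi
    simp only [hdiv, intervalIntegral.integral_zero] at key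
    have hper : ∀ x : ℝ, G (x, 2*Real.pi) = G (x, 0) := by
      intro x
      have harg : Complex.exp ((x:ℂ) + ((2*Real.pi : ℝ):ℂ)*I)
          = Complex.exp ((x:ℂ) + ((0:ℝ):ℂ)*I) := by
        have hp := Complex.exp_periodic ((x:ℂ) + ((0:ℝ):ℂ)*I)
        rw [show (x:ℂ) + ((2*Real.pi : ℝ):ℂ)*I = ((x:ℂ) + ((0:ℝ):ℂ)*I) + 2*(Real.pi:ℂ)*I by
          push_cast; ring]
        exact hp
      simp only [hGdef, hψdef, ← he, harg]
    have hGint : (∫ x in (0:ℝ)..a, G (x, 2*Real.pi)) = ∫ x in (0:ℝ)..a, G (x, 0) := by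
      congr 1
      funext x
      exact hper x
    have hJa : J a = ∫ y in (0:ℝ)..(2*Real.pi), F (a, y) := by
      simp only [hJdef, hFdef, he]
    have hJ0e : J 0 = ∫ y in (0:ℝ)..(2*Real.pi), F (0, y) := by
      simp only [hJdef, hFdef, he]
    rw [hGint] at key
    rw [hJa, hJ0e]
    linarith
  -- value of J 0 via a → -∞
  have hconty : ∀ a : ℝ, Continuous fun y : ℝ => (ψ ((a:ℂ) + y*I)).im := by
    intro a
    exact Complex.continuous_im.comp (hψc.comp
      (continuous_const.add (Complex.continuous_ofReal.mul continuous_const)))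
  have hre : ∀ a y : ℝ, ‖Complex.exp ((a:ℂ) + (y:ℂ)*I)‖ = Real.exp a := by
    intro a y
    rw [Complex.norm_exp]
    congr 1
    simp [Complex.add_re, Complex.ofReal_re, Complex.mul_re, Complex.ofReal_im,
      Complex.I_re, Complex.I_im]
  have hJest : ∀ (a : ℝ) (T : ℝ) (ε : ℝ), 0 < ε →
      (∀ y : ℝ, |(ψ ((a:ℂ) + y*I)).im - T| ≤ ε) → |J a - 2*Real.pi*T| ≤ 2*Real.pi*ε := by
    intro a T ε hε hbound
    have hIi : IntervalIntegrable (fun y : ℝ => (ψ ((a:ℂ) + y*I)).im) volume 0 (2*Real.pi) :=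
      (hconty a).intervalIntegrable _ _
    have hsub : J a - 2*Real.pi*T
        = ∫ y in (0:ℝ)..(2*Real.pi), ((ψ ((a:ℂ) + y*I)).im - T) := by
      rw [intervalIntegral.integral_sub hIi intervalIntegrable_const,
        intervalIntegral.integral_const]
      simp only [hJdef, smul_eq_mul]
      ring
    have hle := intervalIntegral.norm_integral_le_of_norm_le_const
      (C := ε) (f := fun y : ℝ => (ψ ((a:ℂ) + y*I)).im - T) (a := (0:ℝ)) (b := 2*Real.pi)
      (fun y _ => by simpa [Real.norm_eq_abs] using hbound y)
    rw [← hsub] at hle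
    rw [Real.norm_eq_abs] at hle
    calc |J a - 2*Real.pi*T| ≤ ε * |2*Real.pi - 0| := hle
      _ = 2*Real.pi*ε := by rw [sub_zero, abs_of_pos (by positivity)]; ring
  have hJ0 : J 0 = 2*Real.pi*(f 0).im := by
    apply eq_of_forall_abs_le
    intro ε hε
    obtain ⟨δ, hδ, hδ'⟩ := Metric.continuousAt_iff.mp (hfc.continuousAt (x := 0)) ε hε
    set a := Real.log (δ/2) with ha
    have hexpa : Real.exp a = δ/2 := Real.exp_log (by positivity)
    have hbound : ∀ y : ℝ, |(ψ ((a:ℂ) + y*I)).im - (f 0).im| ≤ ε := by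
      intro y
      have hz : ‖Complex.exp ((a:ℂ) + (y:ℂ)*I)‖ = δ/2 := by
        rw [hre a y, hexpa]
      have hdist : dist (Complex.exp ((a:ℂ) + (y:ℂ)*I)) 0 < δ := by
        rw [Complex.dist_eq, sub_zero, hz]
        linarith
      have hlt := hδ' hdist
      rw [Complex.dist_eq] at hlt
      calc |(ψ ((a:ℂ) + y*I)).im - (f 0).im|
          = |(ψ ((a:ℂ) + y*I) - f 0).im| := by rw [Complex.sub_im]
        _ ≤ ‖ψ ((a:ℂ) + y*I) - f 0‖ := Complex.abs_im_le_norm _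
        _ ≤ ε := le_of_lt hlt
    rw [← hJconst a]
    exact hJest a _ ε hε hbound
  -- value of J 0 via a → ∞
  have hJ0' : J 0 = 0 := by
    apply eq_of_forall_abs_le
    intro ε hε
    set C' := max C 1 with hC'
    have hC1 : (1:ℝ) ≤ C' := le_max_right _ _
    have hC0 : (0:ℝ) < C' := lt_of_lt_of_le one_pos hC1
    have hCC : C ≤ C' := le_max_left _ _
    set r := max (max R 1) (C'*(2+C')/ε) with hrdef
    have hr1 : (1:ℝ) ≤ r := le_trans (le_max_right R 1) (le_max_left _ _)
    have hrR : R ≤ r := le_trans (le_max_left R 1) (le_max_left _ _)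
    have hrε : C'*(2+C')/ε ≤ r := le_max_right _ _
    have hr0 : (0:ℝ) < r := lt_of_lt_of_le one_pos hr1
    have hfinal : C'*(2+C')/r ≤ ε := by
      rw [div_le_iff₀ hr0]
      rw [div_le_iff₀ hε] at hrε
      calc C'*(2+C') ≤ r * ε := hrε
        _ = ε * r := mul_comm _ _
    set a := Real.log r with ha
    have hexpa : Real.exp a = r := Real.exp_log hr0
    have hbound : ∀ y : ℝ, |(ψ ((a:ℂ) + y*I)).im - 0| ≤ ε := by
      intro y
      set k := Complex.exp ((a:ℂ) + (y:ℂ)*I) with hk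
      have hknorm : ‖k‖ = r := by
        rw [hk, hre a y, hexpa]
      have hnknorm : ‖-k‖ = r := by rw [norm_neg, hknorm]
      have h1 : ‖μ k - 1‖ ≤ C / r := by
        have := hCR k (by rw [hknorm]; exact hrR)
        rwa [hknorm] at this
      have h2 : ‖μ (-k) - 1‖ ≤ C / r := by
        have := hCR (-k) (by rw [hnknorm]; exact hrR)
        rwa [hnknorm] at this
      have hCnn : 0 ≤ C / r := le_trans (norm_nonneg _) h1
      have hCr' : C / r ≤ C' / r := by gcongr
      have hC'r : C' / r ≤ C' := div_le_self (le_of_lt hC0) hr1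
      have hμk : ‖μ (-k)‖ ≤ 1 + C / r := by
        calc ‖μ (-k)‖ = ‖(μ (-k) - 1) + 1‖ := by ring_nf
          _ ≤ ‖μ (-k) - 1‖ + ‖(1:ℂ)‖ := norm_add_le _ _
          _ = ‖μ (-k) - 1‖ + 1 := by rw [norm_one]
          _ ≤ C / r + 1 := by linarith
          _ = 1 + C / r := by ring
      have hsplit : f k - 1 = (μ k - 1) * μ (-k) + (μ (-k) - 1) := by
        simp only [hfdef]
        ring
      have hfk : ‖f k - 1‖ ≤ ε := by
        calc ‖f k - 1‖ = ‖(μ k - 1) * μ (-k) + (μ (-k) - 1)‖ := by rw [hsplit]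
          _ ≤ ‖(μ k - 1) * μ (-k)‖ + ‖μ (-k) - 1‖ := norm_add_le _ _
          _ = ‖μ k - 1‖ * ‖μ (-k)‖ + ‖μ (-k) - 1‖ := by rw [norm_mul]
          _ ≤ (C/r) * (1 + C/r) + C/r := by
              gcongr
          _ ≤ (C'/r) * (1 + C') + C'/r := by
              have : C / r ≤ C' := le_trans hCr' hC'r
              gcongr <;> linarith
          _ = C'*(2+C')/r := by field_simp; ring
          _ ≤ ε := hfinal
      have him1 : (ψ ((a:ℂ) + y*I)).im - 0 = (ψ ((a:ℂ) + y*I) - 1).im := by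
        rw [Complex.sub_im]
        simp
      rw [him1]
      calc |(ψ ((a:ℂ) + y*I) - 1).im| ≤ ‖ψ ((a:ℂ) + y*I) - 1‖ :=
            Complex.abs_im_le_norm _
        _ = ‖f k - 1‖ := by rfl
        _ ≤ ε := hfk
    rw [← hJconst a]
    have := hJest a 0 ε hε hbound
    simpa using this
  -- conclusion
  have hT : (f 0).im = 0 := by
    have h : 2*Real.pi*(f 0).im = 0 := by rw [← hJ0, hJ0']
    rcases mul_eq_zero.mp h with h' | h'
    · exact absurd h' (by positivity)
    · exact h'
  have hf0 : f 0 = μ 0 ^ 2 := by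
    simp [hfdef, pow_two]
  have him : (μ 0 ^ 2).im = 0 := by rw [← hf0]; exact hT
  constructor
  · have : conj (μ 0 ^ 2) = μ 0 ^ 2 := Complex.conj_eq_iff_im.mpr him
    rw [← this, map_pow]
  · have : (μ 0 ^ 2).im = 2 * ((μ 0).re * (μ 0).im) := by
      rw [pow_two, Complex.mul_im]; ring
    rw [this] at him
    have : (μ 0).re * (μ 0).im = 0 := by linarith
    rcases mul_eq_zero.mp this with h | h
    · right; exact h
    · left; exact h
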